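/- Completeness of the repair encoding (abstract form): if there exists a total substructure M' of M with M', s0 ⊨ η, then there exists a valuation V of the variables E_{s,t} and X_{s,ψ} (ψ ∈ sub(η)) satisfying: X_{s0,η}; totality clauses ⋁_t E_{s,t} for each s; propositional labeling and consistency clauses; and the nexttime clauses X_{s,AXφ} ↔ ⋀_t (E_{s,t} → X_{t,φ}) and X_{s,EXφ} ↔ ⋁_t (E_{s,t} ∧ X_{t,φ}). (Restrict η to CTL formulas built from literals, ∧, ∨, ¬, AX, EX.) -/

import Mathlib

/-- CTL formulas built from atoms, ¬, ∧, ∨, AX, EX. -/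
inductive CTL (AP : Type) : Type
  | atom : AP → CTL AP
  | neg : CTL AP → CTL AP
  | and : CTL AP → CTL AP → CTL AP
  | or : CTL AP → CTL AP → CTL AP
  | ax : CTL AP → CTL AP
  | ex : CTL AP → CTL AP

/-- CTL semantics over a structure with transitions R and labeling L. -/
def CTL.Sat {St AP : Type} (R : St → St → Prop) (L : St → Set AP) :
    St → CTL AP → Prop
  | s, .atom p => p ∈ L s
  | s, .neg φ => ¬ CTL.Sat R L s φ
  | s, .and φ ψ => CTL.Sat R L s φ ∧ CTL.Sat R L s ψ
  | s, .or φ ψ => CTL.Sat R L s φ ∨ CTL.Sat R L s ψ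
  | s, .ax φ => ∀ t, R s t → CTL.Sat R L t φ
  | s, .ex φ => ∃ t, R s t ∧ CTL.Sat R L t φ

/-- The set of subformulas of a CTL formula. -/
def CTL.subf {AP : Type} : CTL AP → Set (CTL AP)
  | .atom p => {.atom p}
  | .neg φ => insert (.neg φ) φ.subf
  | .and φ ψ => insert (.and φ ψ) (φ.subf ∪ ψ.subf)
  | .or φ ψ => insert (.or φ ψ) (φ.subf ∪ ψ.subf)
  | .ax φ => insert (.ax φ) φ.subf
  | .ex φ => insert (.ex φ) φ.subf

/-- Completeness of the repair encoding (abstract form): if M has a total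
    substructure M' (same initial state) with M', s0 ⊨ η, then there is a
    valuation of the E and X variables satisfying all clauses of repair(M,η). -/
theorem repair_encoding_complete {St AP : Type} [Fintype St]
    (s0 : St) (R : St → St → Prop) (L : St → Set AP)
    (totalM : ∀ s, ∃ t, R s t)
    (η : CTL AP)
    (R' : St → St → Prop)
    (hsub : ∀ u v, R' u v → R u v)
    (htot : ∀ u, ∃ v, R' u v)
    (hsat : CTL.Sat R' L s0 η) :
    ∃ (vE : St → St → Bool) (vX : St → CTL AP → Bool),
      -- M' satisfies η
      vX s0 η = true ∧
      -- totality clauses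
      (∀ s, ∃ t, R s t ∧ vE s t = true) ∧
      -- propositional labeling
      (∀ s p, CTL.atom p ∈ η.subf → (vX s (.atom p) = true ↔ p ∈ L s)) ∧
      -- propositional consistency
      (∀ s φ, CTL.neg φ ∈ η.subf → (vX s (.neg φ) = true ↔ ¬ vX s φ = true)) ∧
      (∀ s φ ψ, CTL.and φ ψ ∈ η.subf →
        (vX s (.and φ ψ) = true ↔ vX s φ = true ∧ vX s ψ = true)) ∧
      (∀ s φ ψ, CTL.or φ ψ ∈ η.subf →
        (vX s (.or φ ψ) = true ↔ vX s φ = true ∨ vX s ψ = true)) ∧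
      -- nexttime clauses
      (∀ s φ, CTL.ax φ ∈ η.subf →
        (vX s (.ax φ) = true ↔ ∀ t, R s t → vE s t = true → vX t φ = true)) ∧
      (∀ s φ, CTL.ex φ ∈ η.subf →
        (vX s (.ex φ) = true ↔ ∃ t, R s t ∧ vE s t = true ∧ vX t φ = true)) := by
  classical
  refine ⟨fun s t => decide (R' s t), fun s φ => decide (CTL.Sat R' L s φ),
    by simpa [decide_eq_true_iff] using hsat, ?_, ?_, ?_, ?_, ?_, ?_, ?_⟩
  · intro s
    obtain ⟨t, ht⟩ := htot s
    exact ⟨t, hsub s t ht, by simpa [decide_eq_true_iff] using ht⟩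
  · intro s p _
    simp only [decide_eq_true_iff]; simp [CTL.Sat]
  · intro s φ _
    simp only [decide_eq_true_iff]; simp [CTL.Sat]
  · intro s φ ψ _
    simp only [decide_eq_true_iff]; simp [CTL.Sat]
  · intro s φ ψ _
    simp only [decide_eq_true_iff]; simp [CTL.Sat]
  · intro s φ _
    simp only [decide_eq_true_iff]; simp only [CTL.Sat]
    constructor
    · intro h t _ ht; exact h t ht
    · intro h t ht; exact h t (hsub s t ht) ht
  · intro s φ _
    simp only [decide_eq_true_iff]; simp only [CTL.Sat]
    constructor
    · rintro ⟨t, ht, hφ⟩; exact ⟨t, hsub s t ht, ht, hφ⟩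
    · rintro ⟨t, _, ht, hφ⟩; exact ⟨t, ht, hφ⟩
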